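/- Let A --x--> X₀ --y--> C --δ--> A⟦1⟧ and A --x'--> X₀' --y'--> C' --δ'--> A⟦1⟧ be distinguished triangles with X₀ and X₀' objects of X and with x and x' both left X-approximations of A. Then C and C' are isomorphic in the quotient category C/X. -/

import Mathlib

/-!
Common definitions: the ideal of morphisms factoring through a subcategory `X`
(given as a set of objects of `C`), `X`-monic and `X`-epic morphisms, left and
right `X`-approximations, additive subcategories closed under isomorphisms,
direct sums and direct summands, and the additive quotient category `C/X`
(realized via `CategoryTheory.Quotient` of the relation `xRel X`).
-/

open CategoryTheory Category Limits Pretriangulated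

universe v u

namespace PaperStmt

variable {C : Type u} [Category.{v} C]

/-- `f` factors through an object of `X`. -/
def FactorsThru (X : Set C) {A B : C} (f : A ⟶ B) : Prop :=
  ∃ (M : C) (g : A ⟶ M) (h : M ⟶ B), M ∈ X ∧ g ≫ h = f

/-- `f : A ⟶ B` is `X`-monic: the map `Hom(B, X') → Hom(A, X')`, `g ↦ g ∘ f`,
is surjective for every object `X'` of `X`. -/
def IsXMonic (X : Set C) {A B : C} (f : A ⟶ B) : Prop :=
  ∀ ⦃X' : C⦄, X' ∈ X → ∀ g : A ⟶ X', ∃ h : B ⟶ X', f ≫ h = g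

/-- `f : A ⟶ B` is `X`-epic: the map `Hom(X', A) → Hom(X', B)`, `g ↦ f ∘ g`,
is surjective for every object `X'` of `X`. -/
def IsXEpic (X : Set C) {A B : C} (f : A ⟶ B) : Prop :=
  ∀ ⦃X' : C⦄, X' ∈ X → ∀ g : X' ⟶ B, ∃ h : X' ⟶ A, h ≫ f = g

/-- `α : A ⟶ X₀` is a left `X`-approximation of `A`: `X₀` lies in `X` and every
morphism from `A` to an object of `X` factors through `α`. -/
def IsLeftApprox (X : Set C) {A X₀ : C} (α : A ⟶ X₀) : Prop :=
  X₀ ∈ X ∧ IsXMonic X α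

/-- `β : X₀ ⟶ B` is a right `X`-approximation of `B`: `X₀` lies in `X` and every
morphism from an object of `X` to `B` factors through `β`. -/
def IsRightApprox (X : Set C) {X₀ B : C} (β : X₀ ⟶ B) : Prop :=
  X₀ ∈ X ∧ IsXEpic X β

/-- `X` is (the object class of) a full additive subcategory of `C`, closed
under isomorphisms, finite direct sums and direct summands. -/
structure IsAdditiveClosedSubcat [Preadditive C] [HasBinaryBiproducts C] (X : Set C) :
    Prop where
  zero_mem : ∀ Z : C, IsZero Z → Z ∈ X
  iso_closed : ∀ {A B : C}, (A ≅ B) → A ∈ X → B ∈ X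
  sum_closed : ∀ {A B : C}, A ∈ X → B ∈ X → (A ⊞ B) ∈ X
  summand_closed : ∀ {A B : C}, (A ⊞ B) ∈ X → A ∈ X

/-- Two morphisms are identified in the quotient category `C/X` precisely when
their difference factors through an object of `X`. -/
def xRel [Preadditive C] (X : Set C) : HomRel C :=
  fun _ _ f g => FactorsThru X (f - g)

/-- if `A --x--> X₀ --y--> Z --δ--> A⟦1⟧` and
`A --x'--> X₀' --y'--> Z' --δ'--> A⟦1⟧` are distinguished triangles with
`X₀, X₀' ∈ X` and `x, x'` left `X`-approximations of `A`, then `Z` and `Z'`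
become isomorphic in the quotient category `C/X`. -/
theorem statement2 [Preadditive C] [HasZeroObject C] [HasShift C ℤ]
    [∀ n : ℤ, (shiftFunctor C n).Additive] [Pretriangulated C] [HasBinaryBiproducts C]
    (X : Set C) (hX : IsAdditiveClosedSubcat X)
    {A X₀ X₀' Z Z' : C}
    (x : A ⟶ X₀) (y : X₀ ⟶ Z) (δ : Z ⟶ (A⟦(1 : ℤ)⟧))
    (x' : A ⟶ X₀') (y' : X₀' ⟶ Z') (δ' : Z' ⟶ (A⟦(1 : ℤ)⟧))
    (hT : Triangle.mk x y δ ∈ distTriang C)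
    (hT' : Triangle.mk x' y' δ' ∈ distTriang C)
    (hx : IsLeftApprox X x) (hx' : IsLeftApprox X x') :
    Nonempty ((Quotient.functor (xRel X)).obj Z ≅ (Quotient.functor (xRel X)).obj Z') := by
  obtain ⟨a, ha⟩ := hx.2 hx'.1 x'
  obtain ⟨b, hb⟩ := hx'.2 hx.1 x
  obtain ⟨φ, hφ₁, hφ₂⟩ := complete_distinguished_triangle_morphism _ _ hT hT' (𝟙 A) a
    (ha.trans (Category.id_comp x').symm)
  obtain ⟨ψ, hψ₁, hψ₂⟩ := complete_distinguished_triangle_morphism _ _ hT' hT (𝟙 A) b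
    (hb.trans (Category.id_comp x).symm)
  dsimp only [Triangle.mk] at φ ψ hφ₁ hφ₂ hψ₁ hψ₂
  have hδ : φ ≫ δ' = δ := by simpa using hφ₂.symm
  have hδ' : ψ ≫ δ = δ' := by simpa using hψ₂.symm
  have key : ∀ (u : Z ⟶ Z), u ≫ δ = δ → xRel X u (𝟙 Z) := by
    intro u hu
    obtain ⟨r, hr⟩ := Triangle.coyoneda_exact₃ _ hT (u - 𝟙 Z)
      (by dsimp only [Triangle.mk]; simp [Preadditive.sub_comp, hu]; rfl)
    exact ⟨X₀, r, y, hx.1, hr.symm⟩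
  refine ⟨⟨(Quotient.functor (xRel X)).map φ, (Quotient.functor (xRel X)).map ψ, ?_, ?_⟩⟩
  · have := CategoryTheory.Quotient.sound (xRel X) (key (φ ≫ ψ) (by rw [assoc, hδ', hδ]))
    simpa using this
  · have key' : ∀ (u : Z' ⟶ Z'), u ≫ δ' = δ' → xRel X u (𝟙 Z') := by
      intro u hu
      obtain ⟨r, hr⟩ := Triangle.coyoneda_exact₃ _ hT' (u - 𝟙 Z')
        (by dsimp only [Triangle.mk]; simp [Preadditive.sub_comp, hu]; rfl)
      exact ⟨X₀', r, y', hx'.1, hr.symm⟩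
    have := CategoryTheory.Quotient.sound (xRel X) (key' (ψ ≫ φ) (by rw [assoc, hδ, hδ']))
    simpa using this

end PaperStmt
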